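/- For nonzero vectors x, y in ℂ^n, there exists a skew-Hermitian matrix S with Sx = y if and only if the real part of x^H y is zero. -/
import Mathlib


open Matrix

lemma vecMulVec_mulVec' {n : ℕ} (a b v : Fin n → ℂ) :
    vecMulVec a b *ᵥ v = (b ⬝ᵥ v) • a := by
  ext i
  simp [mulVec, dotProduct, vecMulVec_apply, Finset.sum_mul, Finset.mul_sum, mul_comm,
    mul_left_comm]

theorem skewherm_mapping_exists {n : ℕ} (x y : Fin n → ℂ) (hx : x ≠ 0) (hy : y ≠ 0) :
    (∃ S : Matrix (Fin n) (Fin n) ℂ, Sᴴ = -S ∧ S *ᵥ x = y) ↔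
      (star x ⬝ᵥ y).re = 0 := by
  constructor
  · rintro ⟨S, hS, rfl⟩
    have h1 : star (star x ⬝ᵥ S *ᵥ x) = -(star x ⬝ᵥ S *ᵥ x) := by
      calc star (star x ⬝ᵥ S *ᵥ x) = star (S *ᵥ x) ⬝ᵥ x := by
            rw [star_dotProduct, star_star]
        _ = (star x ᵥ* Sᴴ) ⬝ᵥ x := by rw [star_mulVec]
        _ = star x ⬝ᵥ (Sᴴ *ᵥ x) := by rw [dotProduct_mulVec]
        _ = -(star x ⬝ᵥ S *ᵥ x) := by rw [hS, neg_mulVec, dotProduct_neg]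
    have := congrArg Complex.re h1
    simp [Complex.conj_re] at this ⊢
    linarith
  · intro hre
    set c : ℂ := star x ⬝ᵥ y with hc
    set μ : ℂ := star x ⬝ᵥ x with hμ
    have hμ0 : μ ≠ 0 := by
      intro h
      open scoped ComplexOrder in
      exact hx (dotProduct_star_self_eq_zero.mp h)
    have hμstar : star μ = μ := by
      simp [hμ, star_dotProduct, dotProduct_comm, dotProduct, map_sum, mul_comm]
    have hcstar : star c = -c := by
      have : c.re = 0 := hre
      have h2 : (starRingEnd ℂ) c = -c := by
        apply Complex.ext <;> simp [Complex.conj_re, Complex.conj_im, this]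
      simpa using h2
    refine ⟨μ⁻¹ • (vecMulVec y (star x) - vecMulVec x (star y))
        - (μ⁻¹ * μ⁻¹ * c) • vecMulVec x (star x), ?_, ?_⟩
    · have h1 : (vecMulVec y (star x))ᴴ = vecMulVec x (star y) := by
        ext i j; simp [vecMulVec_apply, conjTranspose_apply, mul_comm]
      have h2 : (vecMulVec x (star x))ᴴ = vecMulVec x (star x) := by
        ext i j; simp [vecMulVec_apply, conjTranspose_apply, mul_comm]
      have h3 : (vecMulVec x (star y))ᴴ = vecMulVec y (star x) := by
        ext i j; simp [vecMulVec_apply, conjTranspose_apply, mul_comm]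
      rw [conjTranspose_sub, conjTranspose_smul, conjTranspose_smul, conjTranspose_sub,
        h1, h2, h3]
      have h4 : star (μ⁻¹ * μ⁻¹ * c) = -(μ⁻¹ * μ⁻¹ * c) := by
        simp [star_inv₀, hμstar, hcstar]
      rw [h4, star_inv₀, hμstar]
      module
    · rw [sub_mulVec, smul_mulVec, smul_mulVec, sub_mulVec,
        vecMulVec_mulVec', vecMulVec_mulVec', vecMulVec_mulVec']
      have hyx : star y ⬝ᵥ x = -c := by
        rw [← hcstar]
        simp [hc, star_dotProduct, dotProduct_comm, dotProduct, map_sum, mul_comm]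
      rw [hyx]
      match_scalars <;> field_simp <;> ring
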